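/- Consider the sticky-particle / pool-adjacent-violators system: particles i = 1,…,d with unit mass, initial positions x_1 ≤ … ≤ x_d and targets y_i = x_i + v_i. The final position of particle 1 equals min_{1 ≤ j ≤ d} avg(y_1,…,y_j), and particle 1 ends up merged with particle i if and only if i ≤ argmin_j avg(y_{1:j}). -/

import Mathlib

/-- Variational inequality for the isotonic minimizer: if moving `u` in
direction `w` by any small positive step keeps it monotone, then the
directional derivative of the squared error is nonnegative. -/
lemma stmt12_key {d : ℕ} (y u : Fin d → ℝ)
    (hmin : ∀ v : Fin d → ℝ, Monotone v →
      ∑ i, (u i - y i)^2 ≤ ∑ i, (v i - y i)^2)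
    (w : Fin d → ℝ) (ε : ℝ) (hε : 0 < ε)
    (hmono : ∀ t : ℝ, 0 < t → t ≤ ε → Monotone (fun i => u i + t * w i)) :
    0 ≤ ∑ i, w i * (u i - y i) := by
  set S := ∑ i, w i * (u i - y i) with hS
  set Q := ∑ i, (w i)^2 with hQ
  have hQ0 : 0 ≤ Q := Finset.sum_nonneg fun i _ => sq_nonneg _
  have main : ∀ t : ℝ, 0 < t → t ≤ ε → 0 ≤ 2*t*S + t^2*Q := by
    intro t ht htε
    have h1 := hmin (fun i => u i + t * w i) (hmono t ht htε)
    have h2 : ∑ i, (u i + t * w i - y i)^2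
        = ∑ i, (u i - y i)^2 + (2*t*S + t^2*Q) := by
      rw [hS, hQ, Finset.mul_sum, Finset.mul_sum, ← Finset.sum_add_distrib,
        ← Finset.sum_add_distrib]
      exact Finset.sum_congr rfl fun i _ => by ring
    rw [h2] at h1
    linarith
  by_contra hS0
  push_neg at hS0
  rcases hQ0.eq_or_lt with hQe | hQp
  · have := main ε hε le_rfl
    nlinarith
  · set t := min ε (-S/Q) with htdef
    have ht1 : 0 < -S/Q := div_pos (by linarith) hQp
    have ht : 0 < t := lt_min hε ht1
    have h := main t ht (min_le_left _ _)
    have htQ : t * Q ≤ -S := by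
      have : t ≤ -S/Q := min_le_right _ _
      calc t * Q ≤ (-S/Q) * Q := by nlinarith
        _ = -S := by field_simp
    nlinarith

theorem stmt12 {d : ℕ} (hd : 0 < d) (y u : Fin d → ℝ)
    (hu : Monotone u)
    (hmin : ∀ v : Fin d → ℝ, Monotone v →
      ∑ i, (u i - y i)^2 ≤ ∑ i, (v i - y i)^2)
    (A : Fin d → ℝ)
    (hA : ∀ j, A j = (∑ k ∈ Finset.Iic j, y k) / ((Finset.Iic j).card : ℝ)) :
    IsLeast (Set.range A) (u ⟨0, hd⟩) ∧
    ∃ jstar : Fin d, A jstar = u ⟨0, hd⟩ ∧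
      (∀ j, A j = u ⟨0, hd⟩ → j ≤ jstar) ∧
      (∀ i : Fin d, u i = u ⟨0, hd⟩ ↔ i ≤ jstar) := by
  set z : Fin d := ⟨0, hd⟩ with hz
  set c := u z with hcdef
  have hzle : ∀ i : Fin d, z ≤ i := fun i => Fin.le_def.mpr (Nat.zero_le _)
  have hc : ∀ i, c ≤ u i := fun i => hu (hzle i)
  -- the set of indices where u equals its minimum value c
  set s : Finset (Fin d) := Finset.univ.filter (fun i => u i = c) with hsdef
  have hne : s.Nonempty := ⟨z, by simp [hsdef, hcdef]⟩
  set m : Fin d := s.max' hne with hmdef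
  have hm : u m = c := (Finset.mem_filter.mp (s.max'_mem hne)).2
  have hmax : ∀ i, u i = c → i ≤ m := fun i hi => s.le_max' i (by simp [hsdef, hi])
  have hum : ∀ i, i ≤ m → u i = c := fun i hi => le_antisymm (hm ▸ hu hi) (hc i)
  -- rewriting sums over Iic as full sums with indicators
  have hiic : ∀ (j : Fin d) (f : Fin d → ℝ),
      ∑ i ∈ Finset.Iic j, f i = ∑ i, (if i ≤ j then f i else 0) := by
    intro j f
    rw [← Finset.sum_filter]
    congr 1
    ext i
    simp
  -- F1 : downward perturbation of any prefix
  have F1 : ∀ j : Fin d, ∑ i ∈ Finset.Iic j, (u i - y i) ≤ 0 := by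
    intro j
    have h := stmt12_key y u hmin (fun i => if i ≤ j then (-1:ℝ) else 0) 1 one_pos ?_
    · have heq : ∑ i, (if i ≤ j then (-1:ℝ) else 0) * (u i - y i)
          = -∑ i ∈ Finset.Iic j, (u i - y i) := by
        rw [hiic j (fun i => u i - y i), ← Finset.sum_neg_distrib]
        exact Finset.sum_congr rfl fun i _ => by split <;> ring
      rw [heq] at h
      linarith
    · intro t ht _ i1 i2 h12
      have h12' := hu h12
      simp only
      split_ifs with h1 h2 h2
      · linarith
      · linarith
      · exact absurd (h12.trans h2) h1
      · linarith
  -- F2 : upward perturbation of the prefix ending at m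
  have F2 : 0 ≤ ∑ i ∈ Finset.Iic m, (u i - y i) := by
    obtain ⟨ε, hε, hmono2⟩ : ∃ ε > 0, ∀ t : ℝ, 0 < t → t ≤ ε →
        Monotone (fun i => u i + t * (if i ≤ m then (1:ℝ) else 0)) := by
      by_cases hm1 : m.val + 1 < d
      · set m' : Fin d := ⟨m.val + 1, hm1⟩ with hm'def
        have hm'm : ¬ m' ≤ m := by simp [hm'def, Fin.le_def]
        have hcm' : c < u m' :=
          lt_of_le_of_ne (hc m') (fun h => hm'm (hmax m' h.symm))
        refine ⟨u m' - c, by linarith, ?_⟩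
        intro t ht htε i1 i2 h12
        have h12' := hu h12
        simp only
        split_ifs with h1 h2 h2
        · linarith
        · have hi1 : u i1 ≤ c := hm ▸ hu h1
          have hi2 : m' ≤ i2 := by
            rw [Fin.le_def]
            have : m < i2 := lt_of_not_ge h2
            have := Fin.lt_def.mp this
            simpa [hm'def] using this
          have := hu hi2
          linarith
        · exact absurd (h12.trans h2) h1
        · linarith
      · have hall : ∀ i : Fin d, i ≤ m := by
          intro i
          rw [Fin.le_def]
          have h1 := i.isLt
          have h2 := m.isLt
          omega
        refine ⟨1, one_pos, ?_⟩
        intro t ht _ i1 i2 h12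
        have h12' := hu h12
        simp only [if_pos (hall i1), if_pos (hall i2)]
        linarith
    have h := stmt12_key y u hmin (fun i => if i ≤ m then (1:ℝ) else 0) ε hε hmono2
    have heq : ∑ i, (if i ≤ m then (1:ℝ) else 0) * (u i - y i)
        = ∑ i ∈ Finset.Iic m, (u i - y i) := by
      rw [hiic m (fun i => u i - y i)]
      exact Finset.sum_congr rfl fun i _ => by split <;> ring
    rw [heq] at h
    exact h
  -- basic cardinality facts
  have cardpos : ∀ j : Fin d, (0:ℝ) < ((Finset.Iic j).card : ℝ) := by
    intro j
    have : (Finset.Iic j).Nonempty := ⟨j, Finset.mem_Iic.mpr le_rfl⟩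
    exact_mod_cast Finset.card_pos.mpr this
  have hsum_u_lb : ∀ j : Fin d,
      ((Finset.Iic j).card : ℝ) * c ≤ ∑ i ∈ Finset.Iic j, u i := by
    intro j
    have := Finset.card_nsmul_le_sum (Finset.Iic j) u c (fun i _ => hc i)
    simpa [nsmul_eq_mul] using this
  have hsplit : ∀ (j : Fin d) (f g : Fin d → ℝ),
      ∑ i ∈ Finset.Iic j, (f i - g i)
        = ∑ i ∈ Finset.Iic j, f i - ∑ i ∈ Finset.Iic j, g i :=
    fun j f g => Finset.sum_sub_distrib f g
  -- c is a lower bound of all the prefix averages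
  have hAc : ∀ j, c ≤ A j := by
    intro j
    rw [hA j, le_div_iff₀ (cardpos j)]
    have h1 := F1 j
    rw [hsplit j u y] at h1
    linarith [hsum_u_lb j]
  -- the prefix average at m equals c
  have hsum_um : ∑ i ∈ Finset.Iic m, u i = ((Finset.Iic m).card : ℝ) * c := by
    rw [Finset.sum_congr rfl (fun i hi => hum i (Finset.mem_Iic.mp hi)),
      Finset.sum_const, nsmul_eq_mul]
  have hsum_ym : ∑ i ∈ Finset.Iic m, y i = ((Finset.Iic m).card : ℝ) * c := by
    have h1 := F1 m
    have h2 := F2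
    rw [hsplit m u y] at h1 h2
    linarith
  have hAm : A m = c := by
    rw [hA m, hsum_ym]
    exact mul_div_cancel_left₀ _ (ne_of_gt (cardpos m))
  -- m is the largest index where the prefix average attains c
  have hArg : ∀ j, A j = c → j ≤ m := by
    intro j hj
    by_contra hjm
    have hmj : m < j := lt_of_not_ge hjm
    have hsumy : ∑ i ∈ Finset.Iic j, y i = ((Finset.Iic j).card : ℝ) * c := by
      have := hj
      rw [hA j, div_eq_iff (ne_of_gt (cardpos j))] at this
      linarith [this]
    have hm1 : m.val + 1 < d := by
      have h1 := j.isLt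
      have h2 := Fin.lt_def.mp hmj
      omega
    set m' : Fin d := ⟨m.val + 1, hm1⟩ with hm'def
    have hm'm : ¬ m' ≤ m := by simp [hm'def, Fin.le_def]
    have hcm' : c < u m' :=
      lt_of_le_of_ne (hc m') (fun h => hm'm (hmax m' h.symm))
    have hm'j : m' ∈ Finset.Iic j := by
      rw [Finset.mem_Iic, Fin.le_def]
      have := Fin.lt_def.mp hmj
      simpa [hm'def] using this
    have hstrict : ((Finset.Iic j).card : ℝ) * c < ∑ i ∈ Finset.Iic j, u i := by
      have := Finset.sum_lt_sum (f := fun _ : Fin d => c) (g := u)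
        (fun i _ => hc i) ⟨m', hm'j, hcm'⟩
      simpa [Finset.sum_const, nsmul_eq_mul] using this
    have h1 := F1 j
    rw [hsplit j u y] at h1
    linarith
  refine ⟨⟨⟨m, hAm⟩, ?_⟩, m, hAm, hArg, fun i => ⟨hmax i, hum i⟩⟩
  rintro r ⟨j, rfl⟩
  exact hAc j
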